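/- With R the directed graph on ℕ defined in the context: if x̄ = (x₀,...,xₘ) and ȳ = (y₀,...,yₘ) form a matching pair of m-cycles, then there is some n such that both x̄ and ȳ are contained in the interval [aₙ, aₙ₊₁). -/
import Mathlib


/-- `a 1 = 0`, `b n = a n + n + 1`, `c n = b n + a n`, `a (n+1) = c n + n + 1`. -/
def a : ℕ → ℕ
  | 0 => 0
  | 1 => 0
  | n + 2 => 2 * a (n + 1) + 2 * (n + 1) + 2

def b (n : ℕ) : ℕ := a n + n + 1

def c (n : ℕ) : ℕ := b n + a n

/-- `x` and `y` are joined by an edge of the bidirectional `(n+1)`-cycle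
`s ↔ s+1 ↔ ⋯ ↔ s+n ↔ s`. -/
def adjCyc (s n x y : ℕ) : Prop :=
  (∃ i, i < n ∧ ((x = s + i ∧ y = s + i + 1) ∨ (y = s + i ∧ x = s + i + 1))) ∨
  (x = s ∧ y = s + n) ∨ (x = s + n ∧ y = s)

/-- The directed graph `R` on `ℕ`: for each `n ≥ 1`, bidirectional cycles on
`{a n, …, a n + n}` and `{c n, …, c n + n}`; a directed edge from `a n` to `c n`;
directed edges from every `y ≥ a (n+1)` to `c n + n`; and for `x, y ∈ [b n, c n)`,
an edge from `x` to `y` iff there is an edge from `x - b n` to `y - b n`. -/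
inductive Edge : ℕ → ℕ → Prop
  | cycA {n x y : ℕ} (h : 1 ≤ n) (hxy : adjCyc (a n) n x y) : Edge x y
  | cycC {n x y : ℕ} (h : 1 ≤ n) (hxy : adjCyc (c n) n x y) : Edge x y
  | ac {n : ℕ} (h : 1 ≤ n) : Edge (a n) (c n)
  | down {n y : ℕ} (h : 1 ≤ n) (hy : a (n + 1) ≤ y) : Edge y (c n + n)
  | copy {n x y : ℕ} (h : 1 ≤ n) (hx : b n ≤ x) (hx' : x < c n) (hy : b n ≤ y)
      (hy' : y < c n) (he : Edge (x - b n) (y - b n)) : Edge x y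

/-- `y₀ < y₁ < ⋯ < yₘ` form an `m`-cycle (`m ≥ 1`): there is a bidirectional cycle
`y₀ ↔ y₁ ↔ ⋯ ↔ yₘ ↔ y₀` and no other edges among the `yᵢ`. -/
def IsMCycle (m : ℕ) (y : Fin (m + 1) → ℕ) : Prop :=
  1 ≤ m ∧ StrictMono y ∧
    ∀ i j : Fin (m + 1), Edge (y i) (y j) ↔
      ((i : ℕ) + 1 = (j : ℕ) ∨ (j : ℕ) + 1 = (i : ℕ) ∨
        ((i : ℕ) = 0 ∧ (j : ℕ) = m) ∨ ((j : ℕ) = 0 ∧ (i : ℕ) = m))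

/-- Two `m`-cycles `x̄`, `ȳ` form a matching pair if there is a (one-directional)
edge from `x₀` to `y₀`. -/
def MatchingPair (m : ℕ) (x y : Fin (m + 1) → ℕ) : Prop :=
  IsMCycle m x ∧ IsMCycle m y ∧ Edge (x 0) (y 0) ∧ ¬ Edge (y 0) (x 0)

/-! ### Auxiliary lemmas -/

lemma c_eq (n : ℕ) : c n = a n + n + 1 + a n := rfl

lemma b_eq (n : ℕ) : b n = a n + n + 1 := rfl

lemma a_succ_eq : ∀ {n : ℕ}, 1 ≤ n → a (n + 1) = c n + n + 1
  | n + 1, _ => by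
    show a (n + 2) = _
    rw [c_eq]
    show 2 * a (n + 1) + 2 * (n + 1) + 2 = _
    ring

lemma a_le_succ (n : ℕ) : a n ≤ a (n + 1) := by
  match n with
  | 0 => simp [a]
  | n + 1 =>
    show a (n + 1) ≤ a (n + 2)
    show a (n + 1) ≤ 2 * a (n + 1) + 2 * (n + 1) + 2
    omega

lemma a_mono : Monotone a := monotone_nat_of_le_succ a_le_succ

lemma c_lt_a {j k : ℕ} (hj : 1 ≤ j) (hjk : j < k) : c j + j < a k := by
  have h1 := a_succ_eq hj
  have h2 := a_mono (show j + 1 ≤ k from hjk)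
  omega

/-- Region of the `A`-cycle at level `k`. -/
def RA (k z : ℕ) : Prop := a k ≤ z ∧ z ≤ a k + k

/-- Region of the `C`-cycle at level `k`. -/
def RC (k z : ℕ) : Prop := c k ≤ z ∧ z ≤ c k + k

/-- Region of the recursive copy at level `k`. -/
def RB (k z : ℕ) : Prop := b k ≤ z ∧ z < c k

lemma RA_disj {j k z : ℕ} (hj : 1 ≤ j) (hk : 1 ≤ k) (h1 : RA j z) (h2 : RA k z) : j = k := by
  obtain ⟨h1a, h1b⟩ := h1; obtain ⟨h2a, h2b⟩ := h2
  rcases lt_trichotomy j k with h | h | h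
  · have := c_lt_a hj h; have := c_eq j; omega
  · exact h
  · have := c_lt_a hk h; have := c_eq k; omega

lemma RC_disj {j k z : ℕ} (hj : 1 ≤ j) (hk : 1 ≤ k) (h1 : RC j z) (h2 : RC k z) : j = k := by
  obtain ⟨h1a, h1b⟩ := h1; obtain ⟨h2a, h2b⟩ := h2
  rcases lt_trichotomy j k with h | h | h
  · have := c_lt_a hj h; have := c_eq k; omega
  · exact h
  · have := c_lt_a hk h; have := c_eq j; omega

lemma RA_RC {j k z : ℕ} (hj : 1 ≤ j) (hk : 1 ≤ k) (h1 : RA j z) (h2 : RC k z) : False := by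
  obtain ⟨h1a, h1b⟩ := h1; obtain ⟨h2a, h2b⟩ := h2
  rcases le_or_gt j k with h | h
  · have := a_mono h; have := c_eq j; have := c_eq k; omega
  · have := c_lt_a hk h; omega

lemma RA_RB {j k z : ℕ} (hj : 1 ≤ j) (hk : 1 ≤ k) (h1 : RA j z) (h2 : RB k z) : False := by
  obtain ⟨h1a, h1b⟩ := h1; obtain ⟨h2a, h2b⟩ := h2
  rcases le_or_gt j k with h | h
  · have := a_mono h; have := b_eq k; omega
  · have := c_lt_a hk h; omega

lemma RC_RB {j k z : ℕ} (hj : 1 ≤ j) (hk : 1 ≤ k) (h1 : RC j z) (h2 : RB k z) : False := by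
  obtain ⟨h1a, h1b⟩ := h1; obtain ⟨h2a, h2b⟩ := h2
  rcases lt_or_ge j k with h | h
  · have := c_lt_a hj h; have := b_eq k; omega
  · have := a_mono h; have := c_eq j; have := c_eq k; omega

lemma RB_disj {j k z : ℕ} (hj : 1 ≤ j) (hk : 1 ≤ k) (h1 : RB j z) (h2 : RB k z) : j = k := by
  obtain ⟨h1a, h1b⟩ := h1; obtain ⟨h2a, h2b⟩ := h2
  rcases lt_trichotomy j k with h | h | h
  · have := c_lt_a hj h; have := b_eq k; omega
  · exact h
  · have := c_lt_a hk h; have := b_eq j; omega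

lemma adjCyc_symm {s n x y : ℕ} (h : adjCyc s n x y) : adjCyc s n y x := by
  rcases h with ⟨i, hi, h | h⟩ | ⟨hx, hy⟩ | ⟨hx, hy⟩
  · exact Or.inl ⟨i, hi, Or.inr h⟩
  · exact Or.inl ⟨i, hi, Or.inl h⟩
  · exact Or.inr (Or.inr ⟨hy, hx⟩)
  · exact Or.inr (Or.inl ⟨hy, hx⟩)

lemma adjCyc_range {s n x y : ℕ} (h : adjCyc s n x y) :
    (s ≤ x ∧ x ≤ s + n) ∧ (s ≤ y ∧ y ≤ s + n) := by
  rcases h with ⟨i, hi, h | h⟩ | ⟨hx, hy⟩ | ⟨hx, hy⟩ <;> omega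

lemma edge_cases {u v : ℕ} (h : Edge u v) :
    (∃ n, 1 ≤ n ∧ adjCyc (a n) n u v) ∨
    (∃ n, 1 ≤ n ∧ adjCyc (c n) n u v) ∨
    (∃ n, 1 ≤ n ∧ u = a n ∧ v = c n) ∨
    (∃ n, 1 ≤ n ∧ a (n + 1) ≤ u ∧ v = c n + n) ∨
    (∃ n, 1 ≤ n ∧ b n ≤ u ∧ u < c n ∧ b n ≤ v ∧ v < c n ∧ Edge (u - b n) (v - b n)) := by
  cases h with
  | cycA h hxy => exact Or.inl ⟨_, h, hxy⟩
  | cycC h hxy => exact Or.inr (Or.inl ⟨_, h, hxy⟩)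
  | ac h => exact Or.inr (Or.inr (Or.inl ⟨_, h, rfl, rfl⟩))
  | down h hy => exact Or.inr (Or.inr (Or.inr (Or.inl ⟨_, h, hy, rfl⟩)))
  | copy h hx hx' hy hy' he =>
      exact Or.inr (Or.inr (Or.inr (Or.inr ⟨_, h, hx, hx', hy, hy', he⟩)))

/-- The "down" edges are never reversed. -/
lemma not_edge_down_rev {j u : ℕ} (hj : 1 ≤ j) (hu : a (j + 1) ≤ u) :
    ¬ Edge (c j + j) u := by
  intro h
  have hRC : RC j (c j + j) := ⟨Nat.le_add_right _ _, le_rfl⟩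
  rcases edge_cases h with ⟨i, hi, hadj⟩ | ⟨i, hi, hadj⟩ | ⟨i, hi, e1, e2⟩ |
    ⟨i, hi, e1, e2⟩ | ⟨i, hi, e1, e2, e3, e4, e5⟩
  · exact RA_RC hi hj (adjCyc_range hadj).1 hRC
  · have hr := adjCyc_range hadj
    have hij : i = j := RC_disj hi hj hr.1 hRC
    subst hij
    have := a_succ_eq hj
    omega
  · have : RA i (c j + j) := by rw [e1]; exact ⟨le_rfl, Nat.le_add_right _ _⟩
    exact RA_RC hi hj this hRC
  · have := a_succ_eq hi; have := a_succ_eq hj; omega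
  · exact RC_RB hj hi hRC ⟨e1, e2⟩

/-- The `a n → c n` edges are never reversed. -/
lemma not_edge_c_a {j : ℕ} (hj : 1 ≤ j) : ¬ Edge (c j) (a j) := by
  intro h
  have hRC : RC j (c j) := ⟨le_rfl, Nat.le_add_right _ _⟩
  have hRA : RA j (a j) := ⟨le_rfl, Nat.le_add_right _ _⟩
  rcases edge_cases h with ⟨i, hi, hadj⟩ | ⟨i, hi, hadj⟩ | ⟨i, hi, e1, e2⟩ |
    ⟨i, hi, e1, e2⟩ | ⟨i, hi, e1, e2, e3, e4, e5⟩
  · exact RA_RC hi hj (adjCyc_range hadj).1 hRC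
  · exact RA_RC hj hi hRA (adjCyc_range hadj).2
  · have : RA i (c j) := by rw [e1]; exact ⟨le_rfl, Nat.le_add_right _ _⟩
    exact RA_RC hi hj this hRC
  · have : RC i (a j) := by rw [e2]; exact ⟨Nat.le_add_right _ _, le_rfl⟩
    exact RA_RC hj hi hRA this
  · exact RC_RB hj hi hRC ⟨e1, e2⟩

/-- A bidirectional edge starting in the `A`-region of level `k` stays there. -/
lemma stayA {k u v : ℕ} (hk : 1 ≤ k) (hu : RA k u) (h1 : Edge u v) (h2 : Edge v u) :
    RA k v := by
  rcases edge_cases h1 with ⟨i, hi, hadj⟩ | ⟨i, hi, hadj⟩ | ⟨i, hi, e1, e2⟩ |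
    ⟨i, hi, e1, e2⟩ | ⟨i, hi, e1, e2, e3, e4, e5⟩
  · have hr := adjCyc_range hadj
    have : i = k := RA_disj hi hk hr.1 hu
    subst this; exact hr.2
  · exact absurd (RA_RC hk hi hu (adjCyc_range hadj).1) (not_false)
  · subst e1; subst e2; exact absurd h2 (not_edge_c_a hi)
  · subst e2; exact absurd h2 (not_edge_down_rev hi e1)
  · exact absurd (RA_RB hk hi hu ⟨e1, e2⟩) (not_false)

/-- A bidirectional edge starting in the `C`-region of level `k` stays there. -/
lemma stayC {k u v : ℕ} (hk : 1 ≤ k) (hu : RC k u) (h1 : Edge u v) (h2 : Edge v u) :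
    RC k v := by
  rcases edge_cases h1 with ⟨i, hi, hadj⟩ | ⟨i, hi, hadj⟩ | ⟨i, hi, e1, e2⟩ |
    ⟨i, hi, e1, e2⟩ | ⟨i, hi, e1, e2, e3, e4, e5⟩
  · exact absurd (RA_RC hi hk (adjCyc_range hadj).1 hu) (not_false)
  · have hr := adjCyc_range hadj
    have : i = k := RC_disj hi hk hr.1 hu
    subst this; exact hr.2
  · have : RA i u := by rw [e1]; exact ⟨le_rfl, Nat.le_add_right _ _⟩
    exact absurd (RA_RC hi hk this hu) (not_false)
  · subst e2; exact absurd h2 (not_edge_down_rev hi e1)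
  · exact absurd (RC_RB hk hi hu ⟨e1, e2⟩) (not_false)

/-- A bidirectional edge starting in the copy region of level `k` stays there. -/
lemma stayB {k u v : ℕ} (hk : 1 ≤ k) (hu : RB k u) (h1 : Edge u v) (h2 : Edge v u) :
    RB k v := by
  rcases edge_cases h1 with ⟨i, hi, hadj⟩ | ⟨i, hi, hadj⟩ | ⟨i, hi, e1, e2⟩ |
    ⟨i, hi, e1, e2⟩ | ⟨i, hi, e1, e2, e3, e4, e5⟩
  · exact absurd (RA_RB hi hk (adjCyc_range hadj).1 hu) (not_false)
  · exact absurd (RC_RB hi hk (adjCyc_range hadj).1 hu) (not_false)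
  · have : RA i u := by rw [e1]; exact ⟨le_rfl, Nat.le_add_right _ _⟩
    exact absurd (RA_RB hi hk this hu) (not_false)
  · subst e2; exact absurd h2 (not_edge_down_rev hi e1)
  · have : i = k := RB_disj hi hk ⟨e1, e2⟩ hu
    subst this; exact ⟨e3, e4⟩

/-- A property closed under bidirectional edges propagates along an `m`-cycle. -/
lemma cycle_prop {m : ℕ} {x : Fin (m + 1) → ℕ} (hx : IsMCycle m x) {P : ℕ → Prop}
    (hP : ∀ u v, P u → Edge u v → Edge v u → P v) (h0 : P (x 0)) :
    ∀ i, P (x i) := by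
  obtain ⟨hm, -, hiff⟩ := hx
  have key : ∀ p (hp : p < m + 1), P (x ⟨p, hp⟩) := by
    intro p
    induction p with
    | zero =>
      intro hp
      have h00 : (⟨0, hp⟩ : Fin (m + 1)) = 0 := by ext; simp
      rw [h00]; exact h0
    | succ q ih =>
      intro hp
      have hq : q < m + 1 := by omega
      have e1 : Edge (x ⟨q, hq⟩) (x ⟨q + 1, hp⟩) := (hiff _ _).mpr (Or.inl rfl)
      have e2 : Edge (x ⟨q + 1, hp⟩) (x ⟨q, hq⟩) := (hiff _ _).mpr (Or.inr (Or.inl rfl))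
      exact hP _ _ (ih hq) e1 e2
  intro i
  have := key i.val i.isLt
  simpa using this


/-- If `x̄` and `ȳ` form a matching pair of `m`-cycles, then both are contained
in the interval `[a n, a (n+1))` for some `n`. -/
theorem matchingPair_same_block (m : ℕ) (x y : Fin (m + 1) → ℕ)
    (h : MatchingPair m x y) :
    ∃ n : ℕ, 1 ≤ n ∧ (∀ i : Fin (m + 1), a n ≤ x i ∧ x i < a (n + 1)) ∧
      (∀ i : Fin (m + 1), a n ≤ y i ∧ y i < a (n + 1)) := by
  obtain ⟨hx, hy, hxy, hnyx⟩ := h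
  have hm : 1 ≤ m := hx.1
  rcases edge_cases hxy with ⟨k, hk, hadj⟩ | ⟨k, hk, hadj⟩ | ⟨k, hk, e1, e2⟩ |
    ⟨k, hk, e1, e2⟩ | ⟨k, hk, e1, e2, e3, e4, e5⟩
  · exact absurd (Edge.cycA hk (adjCyc_symm hadj)) hnyx
  · exact absurd (Edge.cycC hk (adjCyc_symm hadj)) hnyx
  · -- the `a k → c k` edge
    have hx0 : RA k (x 0) := by rw [e1]; exact ⟨le_rfl, Nat.le_add_right _ _⟩
    have hy0 : RC k (y 0) := by rw [e2]; exact ⟨le_rfl, Nat.le_add_right _ _⟩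
    have hxall := cycle_prop hx (fun u v hu h1 h2 => stayA hk hu h1 h2) hx0
    have hyall := cycle_prop hy (fun u v hu h1 h2 => stayC hk hu h1 h2) hy0
    refine ⟨k, hk, fun i => ?_, fun i => ?_⟩
    · obtain ⟨ha1, ha2⟩ := hxall i
      have := a_succ_eq hk; have := c_eq k
      constructor <;> omega
    · obtain ⟨ha1, ha2⟩ := hyall i
      have := a_succ_eq hk; have := c_eq k
      constructor <;> omega
  · -- a `down` edge: impossible, `c k + k` has no larger bidirectional neighbour
    exfalso
    have hy0 : RC k (y 0) := by rw [e2]; exact ⟨Nat.le_add_right _ _, le_rfl⟩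
    have h1lt : (1 : ℕ) < m + 1 := by omega
    have h01 : (0 : Fin (m + 1)) < ⟨1, h1lt⟩ := by
      rw [Fin.lt_def]; simp
    have hlt : y 0 < y ⟨1, h1lt⟩ := hy.2.1 h01
    have f1 : Edge (y 0) (y ⟨1, h1lt⟩) := (hy.2.2 _ _).mpr (Or.inl (by simp))
    have f2 : Edge (y ⟨1, h1lt⟩) (y 0) := (hy.2.2 _ _).mpr (Or.inr (Or.inl (by simp)))
    have hy1 : RC k (y ⟨1, h1lt⟩) := stayC hk hy0 f1 f2
    obtain ⟨hb1, hb2⟩ := hy1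
    omega
  · -- a `copy` edge: everything stays inside the copy region
    have hx0 : RB k (x 0) := ⟨e1, e2⟩
    have hy0 : RB k (y 0) := ⟨e3, e4⟩
    have hxall := cycle_prop hx (fun u v hu h1 h2 => stayB hk hu h1 h2) hx0
    have hyall := cycle_prop hy (fun u v hu h1 h2 => stayB hk hu h1 h2) hy0
    refine ⟨k, hk, fun i => ?_, fun i => ?_⟩
    · obtain ⟨ha1, ha2⟩ := hxall i
      have := a_succ_eq hk; have := c_eq k; have := b_eq k
      constructor <;> omega
    · obtain ⟨ha1, ha2⟩ := hyall i
      have := a_succ_eq hk; have := c_eq k; have := b_eq k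
      constructor <;> omega
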